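/- With the notation of the previous construction: if a ≥ 1 and b ≤ 1 are constants such that ρ(z_{m₁}, z_m)^a ≤ ρ(z_{m,j}, z_{m₁,j₁}) ≤ ρ(z_{m₁}, z_m)^b for all m ≠ m₁ and all j, j₁, then (δ(ζ))^{aN} · N r^{N−1} (1−r²)/(1−r^{2N}) ≤ δ(ζ') ≤ (δ(ζ))^{bN} · N r^{N−1} (1−r²)/(1−r^{2N}). -/

import Mathlib

open Metric

/-- The pseudohyperbolic metric on the unit disk. -/
noncomputable def pRho (z w : ℂ) : ℝ :=
  ‖(z - w) / (1 - (starRingEnd ℂ) w * z)‖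

/-- The interpolation characteristic `δ(ζ) = inf_k ∏_{j≠k} ρ(z_j, z_k)` of a sequence. -/
noncomputable def charSeq {ι : Type*} (z : ι → ℂ) : ℝ :=
  ⨅ k : ι, ∏' j : {j : ι // j ≠ k}, pRho (z j) (z k)

lemma pRho_zero_right (z : ℂ) : pRho z 0 = ‖z‖ := by simp [pRho]



open Complex Finset in
lemma pRho_eq (z w : ℂ) : pRho z w =
    ‖z - w‖ / ‖1 - (starRingEnd ℂ) w * z‖ := norm_div _ _

lemma pRho_nonneg (z w : ℂ) : 0 ≤ pRho z w := norm_nonneg _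

open Complex in
lemma key_identity (z w : ℂ) :
    normSq (1 - (starRingEnd ℂ) w * z) - normSq (z - w)
      = (1 - normSq z) * (1 - normSq w) := by
  simp only [normSq_apply, mul_re, mul_im, sub_re, sub_im, one_re, one_im,
    conj_re, conj_im]
  ring

open Complex in
lemma pRho_le_one {z w : ℂ} (hz : ‖z‖ ≤ 1) (hw : ‖w‖ ≤ 1) :
    pRho z w ≤ 1 := by
  rw [pRho_eq]
  rcases eq_or_ne (1 - (starRingEnd ℂ) w * z) 0 with h | h
  · simp [h]
  · have habs : 0 < ‖1 - (starRingEnd ℂ) w * z‖ := norm_pos_iff.mpr h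
    rw [div_le_one habs]
    have h1 : normSq (z - w) ≤ normSq (1 - (starRingEnd ℂ) w * z) := by
      nlinarith [key_identity z w, normSq_nonneg z, normSq_nonneg w,
        Complex.sq_norm z ▸ (by nlinarith [norm_nonneg z] : ‖z‖ ^ 2 ≤ 1),
        Complex.sq_norm w ▸ (by nlinarith [norm_nonneg w] : ‖w‖ ^ 2 ≤ 1)]
    rw [Complex.norm_def, Complex.norm_def]
    exact Real.sqrt_le_sqrt h1

open Complex in
lemma pRho_symm (z w : ℂ) : pRho z w = pRho w z := by
  rw [pRho_eq, pRho_eq, norm_sub_rev]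
  congr 1
  rw [← Complex.norm_conj (1 - (starRingEnd ℂ) w * z)]
  congr 1
  simp [map_sub, map_mul, mul_comm]




open Complex in
lemma one_add_ne_zero {x : ℂ} (hx : ‖x‖ < 1) : (1 : ℂ) + x ≠ 0 := by
  intro h
  have : x = -1 := by linear_combination h
  rw [this] at hx
  simp at hx

open Complex in
lemma one_sub_ne_zero' {x : ℂ} (hx : ‖x‖ < 1) : (1 : ℂ) - x ≠ 0 := by
  intro h
  have : x = 1 := by linear_combination -h
  rw [this] at hx
  simp at hx

open Complex in
lemma pRho_mobius (c u v : ℂ) (hc : ‖c‖ < 1) (hu : ‖u‖ < 1)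
    (hv : ‖v‖ < 1) :
    pRho ((u + c) / (1 + (starRingEnd ℂ) c * u)) ((v + c) / (1 + (starRingEnd ℂ) c * v))
      = pRho u v := by
  have habcu : ‖(starRingEnd ℂ) c * u‖ < 1 := by
    rw [norm_mul, Complex.norm_conj]; nlinarith [norm_nonneg c, norm_nonneg u]
  have habcv : ‖(starRingEnd ℂ) c * v‖ < 1 := by
    rw [norm_mul, Complex.norm_conj]; nlinarith [norm_nonneg c, norm_nonneg v]
  have habvu : ‖(starRingEnd ℂ) v * u‖ < 1 := by
    rw [norm_mul, Complex.norm_conj]; nlinarith [norm_nonneg v, norm_nonneg u]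
  have habc : ‖(starRingEnd ℂ) c * c‖ < 1 := by
    rw [norm_mul, Complex.norm_conj]; nlinarith [norm_nonneg c]
  have hd1 : (1 : ℂ) + (starRingEnd ℂ) c * u ≠ 0 := one_add_ne_zero habcu
  have hd2 : (1 : ℂ) + (starRingEnd ℂ) c * v ≠ 0 := one_add_ne_zero habcv
  have hd2c : (1 : ℂ) + c * (starRingEnd ℂ) v ≠ 0 := by
    intro h
    apply hd2
    have := congrArg (starRingEnd ℂ) h
    simpa [map_add, map_mul, Complex.conj_conj, mul_comm] using this
  have hvu : (1 : ℂ) - (starRingEnd ℂ) v * u ≠ 0 := one_sub_ne_zero' habvu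
  have hcc : (1 : ℂ) - (starRingEnd ℂ) c * c ≠ 0 := one_sub_ne_zero' habc
  set A := (u + c) / (1 + (starRingEnd ℂ) c * u) with hA
  set B := (v + c) / (1 + (starRingEnd ℂ) c * v) with hB
  have h1 : A - B = (u - v) * (1 - (starRingEnd ℂ) c * c)
      / ((1 + (starRingEnd ℂ) c * u) * (1 + (starRingEnd ℂ) c * v)) := by
    rw [hA, hB]
    rw [div_sub_div _ _ hd1 hd2]
    ring
  have h2 : 1 - (starRingEnd ℂ) B * A =
      (1 - (starRingEnd ℂ) c * c) * (1 - (starRingEnd ℂ) v * u)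
        / ((1 + c * (starRingEnd ℂ) v) * (1 + (starRingEnd ℂ) c * u)) := by
    rw [hA, hB]
    rw [map_div₀]
    simp only [map_add, map_mul, Complex.conj_conj, map_one]
    rw [div_mul_div_comm, one_sub_div (mul_ne_zero hd2c hd1)]
    congr 1
    ring
  rw [pRho_eq, pRho_eq, h1, h2]
  rw [norm_div, norm_div, norm_mul, norm_mul, norm_mul, norm_mul]
  have e1 : ‖1 + c * (starRingEnd ℂ) v‖ = ‖1 + (starRingEnd ℂ) c * v‖ := by
    rw [← Complex.norm_conj (1 + c * (starRingEnd ℂ) v)]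
    congr 1
    simp [map_add, map_mul, Complex.conj_conj, mul_comm]
  rw [e1]
  have p1 : 0 < ‖1 + (starRingEnd ℂ) c * u‖ := norm_pos_iff.mpr hd1
  have p2 : 0 < ‖1 + (starRingEnd ℂ) c * v‖ := norm_pos_iff.mpr hd2
  have p3 : 0 < ‖1 - (starRingEnd ℂ) c * c‖ := norm_pos_iff.mpr hcc
  have p4 : 0 < ‖1 - (starRingEnd ℂ) v * u‖ := norm_pos_iff.mpr hvu
  rw [div_div_div_eq, div_eq_div_iff (mul_pos (mul_pos p1 p2) (mul_pos p3 p4)).ne' p4.ne']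
  ring


open Finset Polynomial

lemma nthRootsFinset_eq_image {N : ℕ} (hN : 0 < N) {μ : ℂ} (hμ : IsPrimitiveRoot μ N) :
    nthRootsFinset N (1 : ℂ) = (Finset.range N).image (μ ^ ·) := by
  have h := hμ.nthRoots_eq (one_pow N)
  rw [nthRootsFinset_def, h]
  ext x
  simp [Multiset.mem_toFinset, Finset.mem_image, mul_one]

lemma prod_one_sub_mul {N : ℕ} (hN : 0 < N) {μ : ℂ} (hμ : IsPrimitiveRoot μ N) (x : ℂ) :
    ∏ k ∈ Finset.range N, (1 - μ ^ k * x) = 1 - x ^ N := by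
  have h := hμ.pow_sub_pow_eq_prod_sub_mul (x := (1 : ℂ)) (y := x) hN
  rw [one_pow] at h
  rw [nthRootsFinset_eq_image hN hμ] at h
  rw [h, Finset.prod_image]
  intro i hi j hj hij
  exact hμ.injOn_pow (by simpa using hi) (by simpa using hj) hij

lemma prod_erase_one_sub_pow {N : ℕ} (hN : 0 < N) {μ : ℂ} (hμ : IsPrimitiveRoot μ N) :
    ∏ k ∈ (Finset.range N).erase 0, (1 - μ ^ k) = (N : ℂ) := by
  obtain ⟨n, rfl⟩ := Nat.exists_eq_add_of_lt hN
  simp only [zero_add] at *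
  have h := hμ.prod_one_sub_pow_eq_order
  rw [Nat.cast_add, Nat.cast_one, ← h]
  refine (Finset.prod_bij' (fun k _ => k + 1) (fun k _ => k - 1) ?_ ?_ ?_ ?_ ?_).symm
  · intro k hk
    simp only [Finset.mem_erase, Finset.mem_range] at hk ⊢
    omega
  · intro k hk
    simp only [Finset.mem_erase, Finset.mem_range] at hk ⊢
    omega
  · intro k _
    show k + 1 - 1 = k
    omega
  · intro k hk
    simp only [Finset.mem_erase, Finset.mem_range] at hk
    show k - 1 + 1 = k
    omega
  · intro k _
    rfl

open Finset Complex

lemma pow_val_mod {N : ℕ} {μ : ℂ} (hμ : μ ^ N = 1) (n : ℕ) : μ ^ (n % N) = μ ^ n := by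
  conv_rhs => rw [← Nat.div_add_mod n N, pow_add, pow_mul, hμ, one_pow, one_mul]

lemma pow_fin_add {N : ℕ} [NeZero N] {μ : ℂ} (hμ : μ ^ N = 1) (x y : Fin N) :
    μ ^ ((x + y : Fin N) : ℕ) = μ ^ (x : ℕ) * μ ^ (y : ℕ) := by
  rw [Fin.val_add, pow_val_mod hμ, pow_add]

lemma intra_prod {N : ℕ} [NeZero N] (r : ℝ) (hr0 : 0 < r) (hr1 : r < 1)
    (ω0 : ℂ) (hω0 : ‖ω0‖ = 1) (ω : Fin N → ℂ)
    (hω : ∀ j : Fin N, ω j = ω0 * Complex.exp (2 * Real.pi * Complex.I * (j : ℕ) / N))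
    (j : Fin N) :
    ∏ j₁ ∈ Finset.univ.erase j, pRho ((r:ℂ) * ω j₁) ((r:ℂ) * ω j)
      = N * r ^ (N - 1) * (1 - r ^ 2) / (1 - r ^ (2 * N)) := by
  have hNpos : 0 < N := Nat.pos_of_ne_zero (NeZero.ne N)
  set μ : ℂ := Complex.exp (2 * Real.pi * Complex.I / N) with hμdef
  have hμ : IsPrimitiveRoot μ N := Complex.isPrimitiveRoot_exp N (NeZero.ne N)
  have hμ1 : μ ^ N = 1 := hμ.pow_eq_one
  have hμabs : ∀ k : ℕ, ‖μ ^ k‖ = 1 := by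
    intro k
    rw [norm_pow, hμdef, Complex.norm_exp]
    have : (2 * Real.pi * Complex.I / N).re = 0 := by
      simp [Complex.div_re, Complex.mul_re, Complex.mul_im]
    rw [this, Real.exp_zero, one_pow]
  have hμne : ∀ k : ℕ, μ ^ k ≠ 0 := fun k => pow_ne_zero _ (Complex.exp_ne_zero _)
  have hE : ∀ j : Fin N, ω j = ω0 * μ ^ (j : ℕ) := by
    intro i
    rw [hω i]
    congr 1
    rw [← Complex.exp_nat_mul]
    congr 1
    ring
  have hω0sq : (starRingEnd ℂ) ω0 * ω0 = 1 := by
    have := Complex.normSq_eq_norm_sq ω0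
    rw [hω0] at this
    rw [mul_comm, Complex.mul_conj, this]
    norm_num
  set x : ℂ := ((r ^ 2 : ℝ) : ℂ) with hxdef
  set F : ℕ → ℝ := fun k => r * ‖μ ^ k - 1‖ / ‖1 - μ ^ k * x‖
    with hFdef
  have hfactor : ∀ j₁ : Fin N, pRho ((r:ℂ) * ω j₁) ((r:ℂ) * ω j)
      = F ((j₁ - j : Fin N) : ℕ) := by
    intro j₁
    have hd : ((j₁ - j : Fin N) + j : Fin N) = j₁ := sub_add_cancel j₁ j
    have key : μ ^ ((j₁ - j : Fin N) : ℕ) * μ ^ (j : ℕ) = μ ^ (j₁ : ℕ) := by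
      rw [← pow_fin_add hμ1, hd]
    have hconjpow : (starRingEnd ℂ) (μ ^ (j : ℕ)) * μ ^ (j₁ : ℕ)
        = μ ^ ((j₁ - j : Fin N) : ℕ) := by
      apply mul_right_cancel₀ (hμne (j : ℕ))
      rw [key]
      have : (starRingEnd ℂ) (μ ^ (j : ℕ)) * μ ^ (j₁ : ℕ) * μ ^ (j : ℕ)
          = ((starRingEnd ℂ) (μ ^ (j : ℕ)) * μ ^ (j : ℕ)) * μ ^ (j₁ : ℕ) := by ring
      rw [this]
      have h2 : (starRingEnd ℂ) (μ ^ (j : ℕ)) * μ ^ (j : ℕ) = 1 := by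
        have h3 := Complex.normSq_eq_norm_sq (μ ^ (j : ℕ))
        rw [hμabs] at h3
        rw [mul_comm, Complex.mul_conj, h3]
        norm_num
      rw [h2, one_mul]
    have hnum : (r:ℂ) * ω j₁ - (r:ℂ) * ω j
        = (r:ℂ) * ω0 * μ ^ (j : ℕ) * (μ ^ ((j₁ - j : Fin N) : ℕ) - 1) := by
      rw [hE j₁, hE j, ← key]
      ring
    have hden : 1 - (starRingEnd ℂ) ((r:ℂ) * ω j) * ((r:ℂ) * ω j₁)
        = 1 - μ ^ ((j₁ - j : Fin N) : ℕ) * x := by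
      rw [hE j₁, hE j]
      simp only [map_mul, Complex.conj_ofReal]
      rw [← hconjpow]
      have : (r:ℂ) * ((starRingEnd ℂ) ω0 * (starRingEnd ℂ) (μ ^ (j:ℕ)))
            * ((r:ℂ) * (ω0 * μ ^ (j₁:ℕ)))
          = ((r:ℂ) * (r:ℂ)) * ((starRingEnd ℂ) ω0 * ω0)
            * ((starRingEnd ℂ) (μ ^ (j:ℕ)) * μ ^ (j₁:ℕ)) := by ring
      rw [this, hω0sq, hxdef]
      push_cast
      ring
    rw [pRho_eq, hnum, hden, hFdef]
    simp only [norm_mul, Complex.norm_real, Real.norm_eq_abs, hω0, hμabs, abs_of_pos hr0]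
    ring
  have step1 : ∏ j₁ ∈ Finset.univ.erase j, pRho ((r:ℂ) * ω j₁) ((r:ℂ) * ω j)
      = ∏ k ∈ Finset.univ.erase (0 : Fin N), F (k : ℕ) := by
    refine Finset.prod_bij' (fun j₁ _ => j₁ - j) (fun k _ => k + j) ?_ ?_ ?_ ?_ ?_
    · intro j₁ hj₁
      simp only [Finset.mem_erase, Finset.mem_univ, and_true] at hj₁ ⊢
      rwa [sub_ne_zero]
    · intro k hk
      simp only [Finset.mem_erase, Finset.mem_univ, and_true] at hk ⊢
      intro h
      apply hk
      have := congrArg (· - j) h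
      simpa using this
    · intro j₁ _
      simp [sub_add_cancel]
    · intro k _
      simp [add_sub_cancel_right]
    · intro j₁ _
      exact hfactor j₁
  have step2 : ∏ k ∈ Finset.univ.erase (0 : Fin N), F (k : ℕ)
      = ∏ i ∈ (Finset.range N).erase 0, F i := by
    refine Finset.prod_bij' (fun k _ => (k : ℕ)) (fun i hi => ⟨i, ?_⟩) ?_ ?_ ?_ ?_ ?_
    · simp only [Finset.mem_erase, Finset.mem_range] at hi
      exact hi.2
    · intro k hk
      simp only [Finset.mem_erase, Finset.mem_univ, and_true] at hk
      simp only [Finset.mem_erase, Finset.mem_range]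
      exact ⟨fun h => hk (Fin.ext (by simpa using h)), k.isLt⟩
    · intro i hi
      simp only [Finset.mem_erase, Finset.mem_range] at hi
      simp only [Finset.mem_erase, Finset.mem_univ, and_true]
      intro h
      apply hi.1
      simpa [Fin.ext_iff] using h
    · intro k _
      rfl
    · intro i _
      rfl
    · intro k _
      rfl
  rw [step1, step2]
  have hcard : ((Finset.range N).erase 0).card = N - 1 := by
    rw [Finset.card_erase_of_mem (Finset.mem_range.mpr hNpos), Finset.card_range]
  have habs_sub : ∀ k : ℕ, ‖μ ^ k - 1‖ = ‖1 - μ ^ k‖ :=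
    fun k => norm_sub_rev _ _
  have hsplitF : ∏ i ∈ (Finset.range N).erase 0, F i
      = (r ^ (N - 1) * ∏ i ∈ (Finset.range N).erase 0, ‖1 - μ ^ i‖)
        / ∏ i ∈ (Finset.range N).erase 0, ‖1 - μ ^ i * x‖ := by
    rw [hFdef]
    rw [Finset.prod_div_distrib, Finset.prod_mul_distrib, Finset.prod_const, hcard]
    congr 1
    congr 1
    exact Finset.prod_congr rfl fun i _ => habs_sub i
  rw [hsplitF]
  have hnumprod : ∏ i ∈ (Finset.range N).erase 0, ‖1 - μ ^ i‖ = N := by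
    rw [← norm_prod, prod_erase_one_sub_pow hNpos hμ, Complex.norm_natCast]
  have hx1 : (1 : ℂ) - x ≠ 0 := by
    have hcast : (1 : ℂ) - x = (((1 - r ^ 2 : ℝ)) : ℂ) := by rw [hxdef]; push_cast; ring
    rw [hcast]
    simp only [ne_eq, Complex.ofReal_eq_zero]
    nlinarith
  have hdenprod : ∏ i ∈ (Finset.range N).erase 0, ‖1 - μ ^ i * x‖
      = (1 - r ^ (2 * N)) / (1 - r ^ 2) := by
    have hfull : (1 - x) * ∏ i ∈ (Finset.range N).erase 0, (1 - μ ^ i * x) = 1 - x ^ N := by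
      have h0mem : (0 : ℕ) ∈ Finset.range N := Finset.mem_range.mpr hNpos
      have := Finset.mul_prod_erase (Finset.range N) (fun k => 1 - μ ^ k * x) h0mem
      rw [← prod_one_sub_mul hNpos hμ x, ← this]
      simp
    have herase : ∏ i ∈ (Finset.range N).erase 0, (1 - μ ^ i * x) = (1 - x ^ N) / (1 - x) := by
      rw [eq_div_iff hx1]
      linear_combination hfull
    rw [← norm_prod, herase]
    have hxcast : (1 - x ^ N) / (1 - x) = (((1 - r ^ (2 * N)) / (1 - r ^ 2) : ℝ) : ℂ) := by
      rw [hxdef]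
      push_cast
      rw [← pow_mul]
    have h2N : r ^ (2 * N) < 1 := pow_lt_one₀ hr0.le hr1 (by omega)
    have hr2 : r ^ 2 < 1 := pow_lt_one₀ hr0.le hr1 (by omega)
    rw [hxcast, Complex.norm_real, Real.norm_eq_abs, abs_of_pos]
    exact div_pos (by nlinarith) (by nlinarith)
  rw [hnumprod, hdenprod, div_div_eq_mul_div]
  ring


open Finset Filter

lemma hasProd_of_le_one {ι : Type*} (f : ι → ℝ) (h0 : ∀ i, 0 ≤ f i) (h1 : ∀ i, f i ≤ 1) :
    HasProd f (⨅ s : Finset ι, ∏ i ∈ s, f i) := by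
  classical
  have hanti : Antitone (fun s : Finset ι => ∏ i ∈ s, f i) := by
    intro s t hst
    simp only []
    have : ∏ i ∈ t, f i = (∏ i ∈ t \ s, f i) * ∏ i ∈ s, f i := (Finset.prod_sdiff hst).symm
    rw [this]
    have hle1 : ∏ i ∈ t \ s, f i ≤ 1 := Finset.prod_le_one (fun i _ => h0 i) (fun i _ => h1 i)
    have hnn : 0 ≤ ∏ i ∈ s, f i := Finset.prod_nonneg fun i _ => h0 i
    calc (∏ i ∈ t \ s, f i) * ∏ i ∈ s, f i ≤ 1 * ∏ i ∈ s, f i :=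
          mul_le_mul_of_nonneg_right hle1 hnn
      _ = ∏ i ∈ s, f i := one_mul _
  exact tendsto_atTop_ciInf hanti ⟨0, by rintro x ⟨s, rfl⟩; exact Finset.prod_nonneg fun i _ => h0 i⟩

lemma multipliable_of_le_one {ι : Type*} (f : ι → ℝ) (h0 : ∀ i, 0 ≤ f i) (h1 : ∀ i, f i ≤ 1) :
    Multipliable f := ⟨_, hasProd_of_le_one f h0 h1⟩

lemma tprod_nonneg01 {ι : Type*} (f : ι → ℝ) (h0 : ∀ i, 0 ≤ f i) (h1 : ∀ i, f i ≤ 1) :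
    0 ≤ ∏' i, f i := by
  rw [(hasProd_of_le_one f h0 h1).tprod_eq]
  exact le_ciInf fun s => Finset.prod_nonneg fun i _ => h0 i

lemma hasProd_le_nonneg {ι : Type*} {f g : ι → ℝ} {x y : ℝ} (hle : ∀ i, f i ≤ g i)
    (h0 : ∀ i, 0 ≤ f i) (hf : HasProd f x) (hg : HasProd g y) : x ≤ y :=
  le_of_tendsto_of_tendsto' hf hg fun s =>
    Finset.prod_le_prod (fun i _ => h0 i) (fun i _ => hle i)

lemma hasProd_rpow {ι : Type*} {f : ι → ℝ} {p : ℝ} (h0 : ∀ i, 0 ≤ f i) (hp : 0 < p)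
    (hf : HasProd f p) (c : ℝ) : HasProd (fun i => f i ^ c) (p ^ c) := by
  have hcont : ContinuousAt (fun x : ℝ => x ^ c) p :=
    Real.continuousAt_rpow_const p c (Or.inl hp.ne')
  have : Filter.Tendsto (fun s : Finset ι => (∏ i ∈ s, f i) ^ c) atTop (nhds (p ^ c)) :=
    hcont.tendsto.comp hf
  have heq : ∀ s : Finset ι, (∏ i ∈ s, f i) ^ c = ∏ i ∈ s, f i ^ c := fun s =>
    (Real.finset_prod_rpow s f (fun i _ => h0 i) c).symm
  have h2 : Filter.Tendsto (fun s : Finset ι => ∏ i ∈ s, f i ^ c) atTop (nhds (p ^ c)) := by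
    simpa only [← heq] using this
  exact h2

/-- If `a ≥ 1` and `b ≤ 1` satisfy
`ρ(z_{m₁},z_m)^a ≤ ρ(z_{m,j}, z_{m₁,j₁}) ≤ ρ(z_{m₁},z_m)^b` for all `m ≠ m₁` and all
`j, j₁`, then `(δ(ζ))^{aN}·N r^{N−1}(1−r²)/(1−r^{2N}) ≤ δ(ζ') ≤ (δ(ζ))^{bN}·N r^{N−1}(1−r²)/(1−r^{2N})`. -/
theorem charSeq_enrichment_sandwich
    (ζ : ℕ → ℂ) (hζ : ∀ m, ζ m ∈ ball (0 : ℂ) 1)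
    (ε : ℝ) (hε : ε ∈ Set.Ioo (0:ℝ) 1)
    (hsep : ∀ i j : ℕ, i ≠ j → ε ≤ pRho (ζ i) (ζ j))
    (hδ : 0 < charSeq ζ)
    (r : ℝ) (hr : r = ε / 4) (N : ℕ) (hN : 1 ≤ N)
    (ω : ℕ → Fin N → ℂ) (hωabs : ∀ m j, ‖ω m j‖ = 1)
    (hωsp : ∀ m j, ω m j = ω m ⟨0, hN⟩ * Complex.exp (2 * Real.pi * Complex.I * (j : ℕ) / N))
    (ζ' : ℕ × Fin N → ℂ)
    (hζ' : ∀ m j, ζ' (m, j) =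
      ((r : ℂ) * ω m j + ζ m) / (1 + (starRingEnd ℂ) (ζ m) * ((r : ℂ) * ω m j)))
    (a b : ℝ) (ha : 1 ≤ a) (hb : b ≤ 1)
    (hbound : ∀ m m₁ : ℕ, m ≠ m₁ → ∀ j j₁ : Fin N,
      pRho (ζ m₁) (ζ m) ^ a ≤ pRho (ζ' (m, j)) (ζ' (m₁, j₁)) ∧
      pRho (ζ' (m, j)) (ζ' (m₁, j₁)) ≤ pRho (ζ m₁) (ζ m) ^ b) :
    charSeq ζ ^ (a * N) * (N * r ^ (N - 1) * (1 - r ^ 2) / (1 - r ^ (2 * N)))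
        ≤ charSeq ζ' ∧
    charSeq ζ' ≤
      charSeq ζ ^ (b * N) * (N * r ^ (N - 1) * (1 - r ^ 2) / (1 - r ^ (2 * N))) := by
  classical
  obtain ⟨hε0, hε1⟩ := hε
  have hr0 : 0 < r := by rw [hr]; linarith
  have hr1 : r < 1 := by rw [hr]; linarith
  haveI : NeZero N := ⟨by omega⟩
  set C : ℝ := (N : ℝ) * r ^ (N - 1) * (1 - r ^ 2) / (1 - r ^ (2 * N)) with hCdef
  have h2N : r ^ (2 * N) < 1 := pow_lt_one₀ hr0.le hr1 (by omega)
  have hrsq : r ^ 2 < 1 := pow_lt_one₀ hr0.le hr1 (by omega)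
  have hC_pos : 0 < C := by
    rw [hCdef]
    apply div_pos
    · apply mul_pos
      · apply mul_pos
        · exact_mod_cast Nat.pos_of_ne_zero (NeZero.ne N)
        · positivity
      · linarith
    · linarith
  have hζabs : ∀ m, ‖ζ m‖ < 1 := by
    intro m
    have := hζ m
    rw [mem_ball, Complex.dist_eq, sub_zero] at this
    exact this
  have habsu : ∀ m jj, ‖(r:ℂ) * ω m jj‖ < 1 := by
    intro m jj
    rw [norm_mul, Complex.norm_real, Real.norm_eq_abs, hωabs m jj, mul_one, abs_of_pos hr0]
    exact hr1
  have hζ'abs : ∀ q : ℕ × Fin N, ‖ζ' q‖ ≤ 1 := by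
    rintro ⟨m, jj⟩
    rw [hζ' m jj, ← pRho_zero_right]
    have h0 : ((-ζ m + ζ m) / (1 + (starRingEnd ℂ) (ζ m) * (-ζ m))) = 0 := by simp
    rw [← h0, pRho_mobius (ζ m) ((r:ℂ) * ω m jj) (-ζ m) (hζabs m) (habsu m jj)
      (by rw [norm_neg]; exact hζabs m)]
    exact pRho_le_one (habsu m jj).le (by rw [norm_neg]; exact (hζabs m).le)
  -- base products
  set p : ℕ → ℝ := fun k => ∏' i : {i : ℕ // i ≠ k}, pRho (ζ i) (ζ k) with hpdef
  have hbaseM : ∀ k : ℕ, Multipliable (fun i : {i : ℕ // i ≠ k} => pRho (ζ i) (ζ k)) :=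
    fun k => multipliable_of_le_one _ (fun i => pRho_nonneg _ _)
      (fun i => pRho_le_one (hζabs _).le (hζabs _).le)
  have hp_nonneg : ∀ k, 0 ≤ p k := fun k =>
    tprod_nonneg01 _ (fun i => pRho_nonneg _ _)
      (fun i => pRho_le_one (hζabs _).le (hζabs _).le)
  have hcseq : charSeq ζ = ⨅ k, p k := rfl
  have hδ_le_p : ∀ k, charSeq ζ ≤ p k := by
    intro k
    rw [hcseq]
    exact ciInf_le ⟨0, by rintro x ⟨k', rfl⟩; exact hp_nonneg k'⟩ k
  have hp_pos : ∀ k, 0 < p k := fun k => lt_of_lt_of_le hδ (hδ_le_p k)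
  -- the enriched products
  have hT01 : ∀ (k : ℕ × Fin N) (i : {i : ℕ × Fin N // i ≠ k}),
      0 ≤ pRho (ζ' i) (ζ' k) ∧ pRho (ζ' i) (ζ' k) ≤ 1 := fun k i =>
    ⟨pRho_nonneg _ _, pRho_le_one (hζ'abs _) (hζ'abs _)⟩
  have hT_nonneg : ∀ k : ℕ × Fin N,
      0 ≤ ∏' i : {i : ℕ × Fin N // i ≠ k}, pRho (ζ' i) (ζ' k) := fun k =>
    tprod_nonneg01 _ (fun i => (hT01 k i).1) (fun i => (hT01 k i).2)
  -- key bound for each point of the enriched sequence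
  have key : ∀ (m : ℕ) (jj : Fin N),
      C * p m ^ (a * N) ≤ (∏' i : {i : ℕ × Fin N // i ≠ (m, jj)}, pRho (ζ' i) (ζ' (m, jj))) ∧
      (∏' i : {i : ℕ × Fin N // i ≠ (m, jj)}, pRho (ζ' i) (ζ' (m, jj))) ≤ C * p m ^ (b * N) := by
    intro m jj
    set f : {i : ℕ × Fin N // i ≠ (m, jj)} → ℝ := fun i => pRho (ζ' i) (ζ' (m, jj)) with hfdef
    have hf0 : ∀ i, 0 ≤ f i := fun i => pRho_nonneg _ _
    have hf1 : ∀ i, f i ≤ 1 := fun i => pRho_le_one (hζ'abs _) (hζ'abs _)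
    set A : Set {i : ℕ × Fin N // i ≠ (m, jj)} := {i | (i.1).1 = m} with hAdef
    have hMA : Multipliable ((f ∘ (↑)) : A → ℝ) :=
      multipliable_of_le_one _ (fun i => hf0 _) (fun i => hf1 _)
    have hMAc : Multipliable ((f ∘ (↑)) : ↑Aᶜ → ℝ) :=
      multipliable_of_le_one _ (fun i => hf0 _) (fun i => hf1 _)
    have hsplit : (∏' x : A, f x) * (∏' x : ↑Aᶜ, f x) = ∏' i, f i :=
      Multipliable.tprod_mul_tprod_compl hMA hMAc
    -- intra-cluster part
    let eA : {j₁ : Fin N // j₁ ≠ jj} ≃ A :=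
      { toFun := fun j₁ => ⟨⟨(m, j₁.1), fun h => j₁.2 (congrArg Prod.snd h)⟩, rfl⟩
        invFun := fun x => ⟨x.1.1.2, fun h => x.1.2 (Prod.ext x.2 h)⟩
        left_inv := fun j₁ => rfl
        right_inv := fun x => Subtype.ext (Subtype.ext (Prod.ext x.2.symm rfl)) }
    have hfac : ∀ j₁ : Fin N, pRho (ζ' (m, j₁)) (ζ' (m, jj))
        = pRho ((r:ℂ) * ω m j₁) ((r:ℂ) * ω m jj) := by
      intro j₁
      rw [hζ' m j₁, hζ' m jj]
      exact pRho_mobius (ζ m) _ _ (hζabs m) (habsu m j₁) (habsu m jj)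
    have h_intra : (∏' x : A, f x) = C := by
      rw [← eA.tprod_eq, tprod_fintype]
      have hcong : ∀ j₁ : {j₁ : Fin N // j₁ ≠ jj},
          f (eA j₁) = pRho ((r:ℂ) * ω m j₁) ((r:ℂ) * ω m jj) := fun j₁ => by
        simp only [hfdef]
        exact hfac j₁.1
      rw [Finset.prod_congr rfl (fun j₁ _ => hcong j₁)]
      rw [← Finset.prod_subtype (Finset.univ.erase jj)
        (fun x => by simp [Finset.mem_erase]) (fun j₁ => pRho ((r:ℂ) * ω m j₁) ((r:ℂ) * ω m jj))]
      rw [intra_prod r hr0 hr1 (ω m ⟨0, hN⟩) (hωabs m ⟨0, hN⟩) (ω m) (hωsp m) jj]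
    -- inter-cluster part
    let eB : ({m₁ : ℕ // m₁ ≠ m} × Fin N) ≃ ↑Aᶜ :=
      { toFun := fun q => ⟨⟨(q.1.1, q.2), fun h => q.1.2 (congrArg Prod.fst h)⟩, fun h => q.1.2 h⟩
        invFun := fun x => (⟨x.1.1.1, fun h => x.2 h⟩, x.1.1.2)
        left_inv := fun q => rfl
        right_inv := fun x => rfl }
    set g : ({m₁ : ℕ // m₁ ≠ m} × Fin N) → ℝ :=
      fun q => pRho (ζ' (q.1.1, q.2)) (ζ' (m, jj)) with hgdef
    have h_inter_eq : (∏' x : ↑Aᶜ, f x) = ∏' q, g q := by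
      rw [← eB.tprod_eq (fun x : ↑Aᶜ => f x)]
      exact tprod_congr (fun q => by simp only [hfdef, hgdef]; rfl)
    have hMg : Multipliable g :=
      multipliable_of_le_one _ (fun q => pRho_nonneg _ _)
        (fun q => pRho_le_one (hζ'abs _) (hζ'abs _))
    have hG : HasProd (fun m₁ : {m₁ : ℕ // m₁ ≠ m} => ∏ j₁ : Fin N, g (m₁, j₁)) (∏' q, g q) :=
      hMg.hasProd.prod_fiberwise (fun m₁ => hasProd_fintype _)
    have hbp : HasProd (fun m₁ : {i : ℕ // i ≠ m} => pRho (ζ m₁) (ζ m)) (p m) :=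
      (hbaseM m).hasProd
    have hGa : HasProd (fun m₁ : {i : ℕ // i ≠ m} => pRho (ζ m₁) (ζ m) ^ (a * N))
        (p m ^ (a * N)) := hasProd_rpow (fun i => pRho_nonneg _ _) (hp_pos m) hbp _
    have hGb : HasProd (fun m₁ : {i : ℕ // i ≠ m} => pRho (ζ m₁) (ζ m) ^ (b * N))
        (p m ^ (b * N)) := hasProd_rpow (fun i => pRho_nonneg _ _) (hp_pos m) hbp _
    have hgfac : ∀ (m₁ : {m₁ : ℕ // m₁ ≠ m}) (j₁ : Fin N),
        pRho (ζ m₁) (ζ m) ^ a ≤ g (m₁, j₁) ∧ g (m₁, j₁) ≤ pRho (ζ m₁) (ζ m) ^ b := by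
      intro m₁ j₁
      have hb' := hbound m m₁.1 (Ne.symm m₁.2) jj j₁
      have hsym : g (m₁, j₁) = pRho (ζ' (m, jj)) (ζ' (m₁.1, j₁)) := by
        rw [hgdef]
        exact pRho_symm _ _
      rw [hsym]
      exact hb'
    have hrpowN : ∀ (x : ℝ) (c : ℝ), 0 ≤ x → (x ^ c) ^ (N : ℕ) = x ^ (c * N) := by
      intro x c hx
      rw [Real.rpow_mul hx, Real.rpow_natCast]
    have hGlow : ∀ m₁ : {m₁ : ℕ // m₁ ≠ m},
        pRho (ζ m₁) (ζ m) ^ (a * N) ≤ ∏ j₁ : Fin N, g (m₁, j₁) := by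
      intro m₁
      have := Finset.prod_le_prod (s := Finset.univ)
        (f := fun _ : Fin N => pRho (ζ m₁) (ζ m) ^ a) (g := fun j₁ => g (m₁, j₁))
        (fun i _ => Real.rpow_nonneg (pRho_nonneg _ _) _)
        (fun i _ => (hgfac m₁ i).1)
      rwa [Finset.prod_const, Finset.card_univ, Fintype.card_fin,
        hrpowN _ _ (pRho_nonneg _ _)] at this
    have hGup : ∀ m₁ : {m₁ : ℕ // m₁ ≠ m},
        (∏ j₁ : Fin N, g (m₁, j₁)) ≤ pRho (ζ m₁) (ζ m) ^ (b * N) := by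
      intro m₁
      have := Finset.prod_le_prod (s := Finset.univ)
        (f := fun j₁ => g (m₁, j₁)) (g := fun _ : Fin N => pRho (ζ m₁) (ζ m) ^ b)
        (fun i _ => pRho_nonneg _ _)
        (fun i _ => (hgfac m₁ i).2)
      rwa [Finset.prod_const, Finset.card_univ, Fintype.card_fin,
        hrpowN _ _ (pRho_nonneg _ _)] at this
    have hq_low : p m ^ (a * N) ≤ ∏' q, g q :=
      hasProd_le_nonneg hGlow (fun m₁ => Real.rpow_nonneg (pRho_nonneg _ _) _) hGa hG
    have hq_up : (∏' q, g q) ≤ p m ^ (b * N) :=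
      hasProd_le_nonneg hGup
        (fun m₁ => Finset.prod_nonneg (fun i _ => pRho_nonneg _ _)) hG hGb
    have hTeq : (∏' i : {i : ℕ × Fin N // i ≠ (m, jj)}, pRho (ζ' i) (ζ' (m, jj)))
        = C * ∏' q, g q := by
      rw [show (∏' i : {i : ℕ × Fin N // i ≠ (m, jj)}, pRho (ζ' i) (ζ' (m, jj))) = ∏' i, f i
        from rfl, ← hsplit, h_intra, h_inter_eq]
    constructor
    · rw [hTeq]
      exact mul_le_mul_of_nonneg_left hq_low hC_pos.le
    · rw [hTeq]
      exact mul_le_mul_of_nonneg_left hq_up hC_pos.le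
  have hcseq' : charSeq ζ' = ⨅ k : ℕ × Fin N,
      ∏' i : {i : ℕ × Fin N // i ≠ k}, pRho (ζ' i) (ζ' k) := rfl
  have hbdd' : BddBelow (Set.range fun k : ℕ × Fin N =>
      ∏' i : {i : ℕ × Fin N // i ≠ k}, pRho (ζ' i) (ζ' k)) :=
    ⟨0, by rintro x ⟨k, rfl⟩; exact hT_nonneg k⟩
  have haN : (0:ℝ) ≤ a * N := by
    have : (1:ℝ) ≤ N := by exact_mod_cast hN
    nlinarith
  constructor
  · rw [hcseq']
    refine le_ciInf ?_
    rintro ⟨m, jj⟩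
    refine le_trans ?_ (key m jj).1
    rw [mul_comm (charSeq ζ ^ (a * (N:ℝ)))]
    apply mul_le_mul_of_nonneg_left _ hC_pos.le
    exact Real.rpow_le_rpow hδ.le (hδ_le_p m) haN
  · have hub : ∀ (m : ℕ) (jj : Fin N), charSeq ζ' ≤ C * p m ^ (b * N) := by
      intro m jj
      rw [hcseq']
      exact le_trans (ciInf_le hbdd' (m, jj)) (key m jj).2
    rcases le_or_gt b 0 with hb0 | hb0
    · refine (hub 0 ⟨0, hN⟩).trans ?_
      rw [mul_comm (charSeq ζ ^ (b * (N:ℝ)))]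
      apply mul_le_mul_of_nonneg_left _ hC_pos.le
      exact Real.rpow_le_rpow_of_nonpos hδ (hδ_le_p 0)
        (by have : (0:ℝ) ≤ N := by positivity
            nlinarith)
    · have hbN : (0:ℝ) ≤ b * N := by positivity
      have hcont : ContinuousAt (fun η : ℝ => (charSeq ζ + η) ^ (b * (N:ℝ)) * C) 0 := by
        apply ContinuousAt.mul _ continuousAt_const
        apply ContinuousAt.rpow_const
        · exact (continuous_const.add continuous_id).continuousAt
        · left
          simpa using hδ.ne'
      have htend : Filter.Tendsto (fun η : ℝ => (charSeq ζ + η) ^ (b * (N:ℝ)) * C)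
          (nhdsWithin 0 (Set.Ioi 0)) (nhds (charSeq ζ ^ (b * (N:ℝ)) * C)) := by
        have := hcont.tendsto
        rw [show charSeq ζ + 0 = charSeq ζ from add_zero _] at this
        exact this.mono_left nhdsWithin_le_nhds
      refine ge_of_tendsto htend ?_
      filter_upwards [self_mem_nhdsWithin] with η hη
      have hη0 : 0 < η := hη
      have hlt : (⨅ k, p k) < charSeq ζ + η := by
        rw [← hcseq]
        linarith
      obtain ⟨k, hk⟩ := exists_lt_of_ciInf_lt hlt
      refine (hub k ⟨0, hN⟩).trans ?_
      rw [mul_comm ((charSeq ζ + η) ^ (b * (N:ℝ)))]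
      apply mul_le_mul_of_nonneg_left _ hC_pos.le
      exact Real.rpow_le_rpow (hp_nonneg k) hk.le hbN
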